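/- Let P ⊆ ℝ^d be a full-dimensional lattice polytope with codegree a satisfying P = ⌊aP⌋ + {P}. Then ⌊aP⌋ = {x ∈ ℝ^d : n_F(x) ≥ 1 − a·h_F for all facets F of P} and {P} = {x ∈ ℝ^d : n_F(x) ≥ (a−1)·h_F − 1 for all facets F of P}; in particular, the two polyhedra on the right-hand sides are lattice polytopes. -/

import Mathlib

open Set Pointwise

/-- The set of lattice points of `ℝ^d`. -/
def latticePoints (d : ℕ) : Set (Fin d → ℝ) :=
  {x | ∀ i, ∃ z : ℤ, x i = (z : ℝ)}

/-- A lattice polytope: the convex hull of a finite set of lattice points. -/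
def IsLatticePolytope {d : ℕ} (P : Set (Fin d → ℝ)) : Prop :=
  ∃ V : Finset (Fin d → ℝ), (V : Set (Fin d → ℝ)) ⊆ latticePoints d ∧
    P = convexHull ℝ (V : Set (Fin d → ℝ))

/-- The natural pairing of an integral linear functional with a point of `ℝ^d`. -/
def pairing {d : ℕ} (n : Fin d → ℤ) (x : Fin d → ℝ) : ℝ :=
  ∑ i, (n i : ℝ) * x i

/-- `P = {x | n_F(x) ≥ -h_F}` is an irredundant presentation with primitive
integral inner normals, i.e. the facet presentation of `P`. -/
def IsFacetPresentation {d m : ℕ} (P : Set (Fin d → ℝ))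
    (n : Fin m → Fin d → ℤ) (h : Fin m → ℤ) : Prop :=
  P = {x | ∀ i, pairing (n i) x ≥ -(h i : ℝ)} ∧
  (∀ i, Finset.univ.gcd (n i) = 1) ∧
  (∀ i, ∃ x : Fin d → ℝ, pairing (n i) x < -(h i : ℝ) ∧
    ∀ j, j ≠ i → pairing (n j) x ≥ -(h j : ℝ))

/-- `a` is the codegree of `P`: the least `k ≥ 1` such that `int(kP)` contains
a lattice point. -/
def IsCodegree {d : ℕ} (P : Set (Fin d → ℝ)) (a : ℕ) : Prop :=
  1 ≤ a ∧ (interior ((a : ℝ) • P) ∩ latticePoints d).Nonempty ∧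
    ∀ k : ℕ, 1 ≤ k → (interior ((k : ℝ) • P) ∩ latticePoints d).Nonempty → a ≤ k

/-- The floor polytope `⌊R⌋ = conv(int(R) ∩ ℤ^d)`. -/
def floorPoly {d : ℕ} (R : Set (Fin d → ℝ)) : Set (Fin d → ℝ) :=
  convexHull ℝ (interior R ∩ latticePoints d)

/-- The remainder polytope `{P} = conv{x ∈ ℤ^d | n_F(x) ≥ (a-1)h_F - 1}`,
defined in terms of the facet presentation data and the codegree `a`. -/
def remPoly {d m : ℕ} (n : Fin m → Fin d → ℤ) (h : Fin m → ℤ) (a : ℕ) :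
    Set (Fin d → ℝ) :=
  convexHull ℝ {x | x ∈ latticePoints d ∧
    ∀ i, pairing (n i) x ≥ ((a : ℝ) - 1) * (h i : ℝ) - 1}

/-- The cone `C_P ⊆ ℝ^d × ℝ` over `P`, in terms of the facet presentation. -/
def coneOver {d m : ℕ} (n : Fin m → Fin d → ℤ) (h : Fin m → ℤ) :
    Set ((Fin d → ℝ) × ℝ) :=
  {p | ∀ i, pairing (n i) p.1 ≥ -(p.2 * (h i : ℝ))}

/-- The interior `int(C_P)` of the cone over `P`. -/
def intCone {d m : ℕ} (n : Fin m → Fin d → ℤ) (h : Fin m → ℤ) :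
    Set ((Fin d → ℝ) × ℝ) :=
  {p | ∀ i, pairing (n i) p.1 > -(p.2 * (h i : ℝ))}

/-- The anticanonical set `ant(C_P)` of the cone over `P`. -/
def antCone {d m : ℕ} (n : Fin m → Fin d → ℤ) (h : Fin m → ℤ) :
    Set ((Fin d → ℝ) × ℝ) :=
  {p | ∀ i, pairing (n i) p.1 ≥ -(p.2 * (h i : ℝ)) - 1}

/-- Lattice points of `ℝ^d × ℝ = ℝ^{d+1}`. -/
def latticePairs (d : ℕ) : Set ((Fin d → ℝ) × ℝ) :=
  {p | p.1 ∈ latticePoints d ∧ ∃ z : ℤ, p.2 = (z : ℝ)}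

/-- The nearly Gorenstein condition with respect to a given facet presentation:
`(C_P ∩ ℤ^{d+1}) \ {0} ⊆ (int(C_P) ∩ ℤ^{d+1}) + (ant(C_P) ∩ ℤ^{d+1})`. -/
def NGIncl {d m : ℕ} (n : Fin m → Fin d → ℤ) (h : Fin m → ℤ) : Prop :=
  (coneOver n h ∩ latticePairs d) \ {(0 : (Fin d → ℝ) × ℝ)} ⊆
    (intCone n h ∩ latticePairs d) + (antCone n h ∩ latticePairs d)

/-- A full-dimensional lattice polytope is nearly Gorenstein if the nearly
Gorenstein inclusion holds for its facet presentation. -/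
def NearlyGorenstein {d : ℕ} (P : Set (Fin d → ℝ)) : Prop :=
  ∃ (m : ℕ) (n : Fin m → Fin d → ℤ) (h : Fin m → ℤ),
    IsFacetPresentation P n h ∧ NGIncl n h

/-- The polar dual `Q* = {y | y(x) ≥ -1 for all x ∈ Q}`. -/
def polarDual {d : ℕ} (Q : Set (Fin d → ℝ)) : Set (Fin d → ℝ) :=
  {y | ∀ x ∈ Q, (∑ i, y i * x i) ≥ -1}

/-- A reflexive polytope: a lattice polytope with `0` in its interior whose
polar dual is again a lattice polytope. -/
def IsReflexive {d : ℕ} (Q : Set (Fin d → ℝ)) : Prop :=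
  IsLatticePolytope Q ∧ (0 : Fin d → ℝ) ∈ interior Q ∧
    IsLatticePolytope (polarDual Q)

/-- A Gorenstein polytope: some dilate `kP`, translated by a lattice vector,
is reflexive. -/
def IsGorenstein {d : ℕ} (P : Set (Fin d → ℝ)) : Prop :=
  ∃ (k : ℕ) (w : Fin d → ℝ), 1 ≤ k ∧ w ∈ latticePoints d ∧
    IsReflexive ((fun x => x - w) '' ((k : ℝ) • P))

/-- The integer decomposition property. -/
def IsIDP {d : ℕ} (P : Set (Fin d → ℝ)) : Prop :=
  ∀ k : ℕ, 1 ≤ k → ∀ x ∈ ((k : ℝ) • P) ∩ latticePoints d,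
    ∃ y : Fin k → Fin d → ℝ, (∀ j, y j ∈ P ∩ latticePoints d) ∧ x = ∑ j, y j

/-- Minkowski indecomposability of a lattice polytope. -/
def IsIndecomposable {d : ℕ} (P : Set (Fin d → ℝ)) : Prop :=
  (¬ ∃ p : Fin d → ℝ, P = {p}) ∧
  ∀ P₁ P₂ : Set (Fin d → ℝ), IsLatticePolytope P₁ → IsLatticePolytope P₂ →
    P = P₁ + P₂ → (∃ p, P₁ = {p}) ∨ (∃ p, P₂ = {p})

/-- A `(0,1)`-polytope: the convex hull of a set of `(0,1)`-vectors. -/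
def Is01Polytope {d : ℕ} (P : Set (Fin d → ℝ)) : Prop :=
  ∃ V : Finset (Fin d → ℝ), (∀ v ∈ V, ∀ i, v i = 0 ∨ v i = 1) ∧
    P = convexHull ℝ (V : Set (Fin d → ℝ))

lemma pairing_add' {d : ℕ} (n : Fin d → ℤ) (x y : Fin d → ℝ) :
    pairing n (x + y) = pairing n x + pairing n y := by
  simp [pairing, mul_add, Finset.sum_add_distrib]

lemma pairing_smul' {d : ℕ} (n : Fin d → ℤ) (r : ℝ) (x : Fin d → ℝ) :
    pairing n (r • x) = r * pairing n x := by
  simp only [pairing, Pi.smul_apply, smul_eq_mul, Finset.mul_sum]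
  exact Finset.sum_congr rfl fun i _ => by ring

lemma convex_halfspaces' {d m : ℕ} (n : Fin m → Fin d → ℤ) (c : Fin m → ℝ) :
    Convex ℝ {x : Fin d → ℝ | ∀ i, pairing (n i) x ≥ c i} := by
  intro x hx y hy α β hα hβ hαβ
  intro i
  have h1 := hx i
  have h2 := hy i
  simp only [ge_iff_le, Set.mem_setOf_eq] at *
  rw [pairing_add', pairing_smul', pairing_smul']
  have e1 : α * c i ≤ α * pairing (n i) x := mul_le_mul_of_nonneg_left h1 hα
  have e2 : β * c i ≤ β * pairing (n i) y := mul_le_mul_of_nonneg_left h2 hβ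
  have e3 : α * c i + β * c i = c i := by rw [← add_mul, hαβ, one_mul]
  linarith

lemma smul_halfspaces' {d m : ℕ} (n : Fin m → Fin d → ℤ) (c : Fin m → ℝ) {r : ℝ} (hr : 0 < r) :
    r • {x : Fin d → ℝ | ∀ i, pairing (n i) x ≥ c i}
      = {x : Fin d → ℝ | ∀ i, pairing (n i) x ≥ r * c i} := by
  ext x
  rw [Set.mem_smul_set]
  constructor
  · rintro ⟨y, hy, rfl⟩ i
    rw [pairing_smul']
    exact mul_le_mul_of_nonneg_left (hy i) hr.le
  · intro hx
    refine ⟨r⁻¹ • x, fun i => ?_, smul_inv_smul₀ hr.ne' x⟩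
    rw [pairing_smul']
    have h1 := mul_le_mul_of_nonneg_left (hx i) (inv_nonneg.mpr hr.le)
    rwa [inv_mul_cancel_left₀ hr.ne'] at h1

lemma interior_strict' {d m : ℕ} {n : Fin m → Fin d → ℤ}
    (hprim : ∀ i, Finset.univ.gcd (n i) = 1) (c : Fin m → ℝ) {x : Fin d → ℝ}
    (hx : x ∈ interior {y : Fin d → ℝ | ∀ i, pairing (n i) y ≥ c i}) (i : Fin m) :
    pairing (n i) x > c i := by
  obtain ⟨ε, hε, hball⟩ := Metric.mem_nhds_iff.mp (mem_interior_iff_mem_nhds.mp hx)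
  set v : Fin d → ℝ := fun j => (n i j : ℝ) with hv
  have hs : 0 < pairing (n i) v := by
    have hne : ∃ j, n i j ≠ 0 := by
      by_contra hc
      push_neg at hc
      have h0 : Finset.univ.gcd (n i) = 0 := Finset.gcd_eq_zero_iff.mpr fun j _ => hc j
      rw [hprim i] at h0
      exact one_ne_zero h0
    obtain ⟨j, hj⟩ := hne
    apply Finset.sum_pos' (fun k _ => mul_self_nonneg _)
    exact ⟨j, Finset.mem_univ j, mul_self_pos.mpr (Int.cast_ne_zero.mpr hj)⟩
  set δ := ε / (2 * (‖v‖ + 1)) with hδ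
  have hδpos : 0 < δ := by positivity
  have hmem : x - δ • v ∈ {y : Fin d → ℝ | ∀ i, pairing (n i) y ≥ c i} := by
    apply hball
    rw [Metric.mem_ball, dist_eq_norm]
    have he : x - δ • v - x = -(δ • v) := by abel
    rw [he, norm_neg, norm_smul, Real.norm_eq_abs, abs_of_pos hδpos]
    have h1 : ‖v‖ < 2 * (‖v‖ + 1) := by nlinarith [norm_nonneg v]
    calc δ * ‖v‖ = ε * (‖v‖ / (2 * (‖v‖+1))) := by rw [hδ]; ring
    _ < ε * 1 := by
        apply mul_lt_mul_of_pos_left _ hε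
        rw [div_lt_one (by positivity)]
        exact h1
    _ = ε := mul_one ε
  have h2 := hmem i
  have h3 : pairing (n i) (x - δ • v) = pairing (n i) x - δ * pairing (n i) v := by
    have he : x - δ • v = x + (-δ) • v := by rw [neg_smul]; abel
    rw [he, pairing_add', pairing_smul']
    ring
  rw [h3] at h2
  nlinarith [mul_pos hδpos hs]

lemma pairing_int' {d : ℕ} (n : Fin d → ℤ) {x : Fin d → ℝ} (hx : x ∈ latticePoints d) :
    ∃ w : ℤ, pairing n x = (w : ℝ) := by
  choose z hz using hx
  refine ⟨∑ i, n i * z i, ?_⟩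
  rw [pairing]
  push_cast
  exact Finset.sum_congr rfl fun i _ => by rw [hz i]

lemma lattice_finite' {d : ℕ} {S : Set (Fin d → ℝ)} (hS : S ⊆ latticePoints d)
    (hbd : Bornology.IsBounded S) : S.Finite := by
  obtain ⟨R, hR⟩ := hbd.subset_closedBall 0
  set N : ℤ := ⌈R⌉ with hN
  have hsub : S ⊆ (fun z : Fin d → ℤ => fun i => ((z i : ℝ))) ''
      ↑(Fintype.piFinset fun _ : Fin d => Finset.Icc (-N) N) := by
    intro x hx
    have hz : ∀ i, ∃ z : ℤ, x i = (z : ℝ) := hS hx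
    choose z hzz using hz
    refine ⟨z, ?_, by funext i; exact (hzz i).symm⟩
    rw [Finset.mem_coe, Fintype.mem_piFinset]
    intro i
    rw [Finset.mem_Icc]
    have hxi : |x i| ≤ R := by
      have h1 : ‖x i‖ ≤ ‖x‖ := norm_le_pi_norm x i
      have h2 : ‖x‖ ≤ R := by
        have h3 := hR hx
        rwa [Metric.mem_closedBall, dist_zero_right] at h3
      exact h1.trans h2
    rw [hzz i] at hxi
    have h5 : |(z i : ℝ)| ≤ (N : ℝ) := hxi.trans (Int.le_ceil R)
    have h4 : |z i| ≤ N := by exact_mod_cast h5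
    exact abs_le.mp h4
  exact Set.Finite.subset (Set.Finite.image _ (Finset.finite_toSet _)) hsub

lemma minkowski_cancel' {d : ℕ} {B C : Set (Fin d → ℝ)} {x : Fin d → ℝ}
    (hBconv : Convex ℝ B) (hBclosed : IsClosed B)
    (hCne : C.Nonempty) (hCbd : Bornology.IsBounded C)
    (hsub : ∀ c ∈ C, x + c ∈ B + C) : x ∈ B := by
  obtain ⟨c0, hc0⟩ := hCne
  obtain ⟨M, hM⟩ := Metric.isBounded_iff.mp hCbd
  have hM0 : 0 ≤ M := le_trans dist_nonneg (hM hc0 hc0)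
  have key : ∀ k : ℕ, ∃ (b : ℕ → Fin d → ℝ) (c : Fin d → ℝ),
      (∀ j ∈ Finset.range k, b j ∈ B) ∧ c ∈ C ∧
      (k : ℝ) • x + c0 = (∑ j ∈ Finset.range k, b j) + c := by
    intro k
    induction k with
    | zero => exact ⟨fun _ => 0, c0, by simp, hc0, by simp⟩
    | succ k ih =>
      obtain ⟨b, c, hb, hc, heq⟩ := ih
      obtain ⟨b', hb', c', hc', hbc⟩ := Set.mem_add.mp (hsub c hc)
      refine ⟨Function.update b k b', c', ?_, hc', ?_⟩
      · intro j hj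
        rcases eq_or_ne j k with rfl | hne
        · rw [Function.update_self]; exact hb'
        · rw [Function.update_of_ne hne]
          have : j < k + 1 := Finset.mem_range.mp hj
          exact hb j (Finset.mem_range.mpr (by omega))
      · have hsum : (∑ j ∈ Finset.range (k+1), Function.update b k b' j)
            = (∑ j ∈ Finset.range k, b j) + b' := by
          rw [Finset.sum_range_succ, Function.update_self]
          congr 1
          exact Finset.sum_congr rfl fun j hj =>
            Function.update_of_ne (Nat.ne_of_lt (Finset.mem_range.mp hj)) _ _
        rw [hsum]
        have hx2 : ((k + 1 : ℕ) : ℝ) • x = (k : ℝ) • x + x := by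
          push_cast
          rw [add_smul, one_smul]
        rw [hx2]
        have hgoal : (k:ℝ) • x + x + c0 = ((k:ℝ) • x + c0) + x := by abel
        rw [hgoal, heq]
        have hgoal2 : (∑ j ∈ Finset.range k, b j) + c + x
            = (∑ j ∈ Finset.range k, b j) + (x + c) := by abel
        rw [hgoal2, ← hbc]
        abel
  rw [← hBclosed.closure_eq]
  rw [Metric.mem_closure_iff]
  intro ε hε
  obtain ⟨k, hk⟩ := exists_nat_gt (M / ε)
  have hMε : 0 ≤ M / ε := div_nonneg hM0 hε.le
  have hkR : (0:ℝ) < k := hMε.trans_lt hk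
  obtain ⟨b, c, hb, hc, heq⟩ := key k
  have hx2 : (k:ℝ) • x = (∑ j ∈ Finset.range k, b j) + c - c0 := eq_sub_of_add_eq heq
  set avg := (k:ℝ)⁻¹ • ∑ j ∈ Finset.range k, b j with havg
  have havgB : avg ∈ B := by
    rw [havg, Finset.smul_sum]
    refine hBconv.sum_mem (fun j _ => by positivity) ?_ (fun j hj => hb j hj)
    rw [Finset.sum_const, Finset.card_range, nsmul_eq_mul]
    field_simp
  have hdiff : x - avg = (k:ℝ)⁻¹ • (c - c0) := by
    have h2 : (k:ℝ) • (x - avg) = c - c0 := by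
      rw [smul_sub, havg, smul_inv_smul₀ hkR.ne', hx2]
      abel
    calc x - avg = (k:ℝ)⁻¹ • ((k:ℝ) • (x - avg)) := (inv_smul_smul₀ hkR.ne' _).symm
    _ = (k:ℝ)⁻¹ • (c - c0) := by rw [h2]
  refine ⟨avg, havgB, ?_⟩
  rw [dist_eq_norm, hdiff, norm_smul, Real.norm_eq_abs, abs_of_pos (inv_pos.mpr hkR)]
  have hnorm : ‖c - c0‖ ≤ M := by rw [← dist_eq_norm]; exact hM hc hc0
  have hle : (k:ℝ)⁻¹ * ‖c - c0‖ ≤ (k:ℝ)⁻¹ * M := mul_le_mul_of_nonneg_left hnorm (by positivity)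
  have hlt : (k:ℝ)⁻¹ * M < ε := by
    have hmk : M < ε * k := by
      have := (div_lt_iff₀ hε).mp hk
      linarith
    calc (k:ℝ)⁻¹ * M = M / k := by ring
    _ < ε := (div_lt_iff₀ hkR).mpr (by linarith)
  linarith

theorem stmt_7 {d : ℕ} (hd : 1 ≤ d) (P : Set (Fin d → ℝ))
    (hP : IsLatticePolytope P) (hfull : (interior P).Nonempty)
    {m : ℕ} (n : Fin m → Fin d → ℤ) (h : Fin m → ℤ)
    (hpres : IsFacetPresentation P n h)
    (a : ℕ) (ha : IsCodegree P a)
    (hdecomp : P = floorPoly ((a : ℝ) • P) + remPoly n h a) :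
    floorPoly ((a : ℝ) • P) =
      {x : Fin d → ℝ | ∀ i, pairing (n i) x ≥ 1 - (a : ℝ) * (h i : ℝ)} ∧
    remPoly n h a =
      {x : Fin d → ℝ | ∀ i, pairing (n i) x ≥ ((a : ℝ) - 1) * (h i : ℝ) - 1} ∧
    IsLatticePolytope
      {x : Fin d → ℝ | ∀ i, pairing (n i) x ≥ 1 - (a : ℝ) * (h i : ℝ)} ∧
    IsLatticePolytope
      {x : Fin d → ℝ | ∀ i, pairing (n i) x ≥ ((a : ℝ) - 1) * (h i : ℝ) - 1} := by
  obtain ⟨hPdesc, hprim, -⟩ := hpres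
  have haR : (0:ℝ) < (a:ℕ) := by exact_mod_cast ha.1
  have hsmul : (a:ℝ) • P
      = {x : Fin d → ℝ | ∀ i, pairing (n i) x ≥ (a:ℝ) * (-(h i : ℝ))} := by
    rw [hPdesc]
    exact smul_halfspaces' n (fun i => -(h i:ℝ)) haR
  -- the two halfspace intersections
  set A := {x : Fin d → ℝ | ∀ i, pairing (n i) x ≥ 1 - (a : ℝ) * (h i : ℝ)} with hA
  set Bs := {x : Fin d → ℝ | ∀ i, pairing (n i) x ≥ ((a : ℝ) - 1) * (h i : ℝ) - 1} with hBs
  set S1 := interior ((a:ℝ) • P) ∩ latticePoints d with hS1def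
  set S2 := {x : Fin d → ℝ | x ∈ latticePoints d ∧
      ∀ i, pairing (n i) x ≥ ((a : ℝ) - 1) * (h i : ℝ) - 1} with hS2def
  have hQ1def : floorPoly ((a:ℝ) • P) = convexHull ℝ S1 := rfl
  have hQ2def : remPoly n h a = convexHull ℝ S2 := rfl
  have hAconv : Convex ℝ A := convex_halfspaces' n _
  have hBconv : Convex ℝ Bs := convex_halfspaces' n _
  have hS1A : S1 ⊆ A := by
    rintro x ⟨hxi, hxl⟩ i
    rw [hsmul] at hxi
    have hstrict := interior_strict' hprim _ hxi i
    obtain ⟨w, hw⟩ := pairing_int' (n i) hxl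
    rw [hw] at hstrict ⊢
    have h1 : ((-((a:ℤ) * h i) : ℤ) : ℝ) < (w : ℝ) := by
      push_cast
      calc -((a:ℝ) * (h i:ℝ)) = (a:ℝ) * (-(h i : ℝ)) := by ring
      _ < (w : ℝ) := hstrict
    have h2 : -((a:ℤ) * h i) < w := by exact_mod_cast h1
    have h3 : 1 - (a:ℤ) * h i ≤ w := by omega
    calc (1:ℝ) - (a:ℝ) * (h i:ℝ) = ((1 - (a:ℤ) * h i : ℤ) : ℝ) := by push_cast; ring
    _ ≤ (w:ℝ) := by exact_mod_cast h3
  have hQ1A : floorPoly ((a:ℝ) • P) ⊆ A := by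
    rw [hQ1def]; exact convexHull_min hS1A hAconv
  have hS2B : S2 ⊆ Bs := fun x hx => hx.2
  have hQ2B : remPoly n h a ⊆ Bs := by
    rw [hQ2def]; exact convexHull_min hS2B hBconv
  have hABP : A + Bs ⊆ P := by
    intro z hz
    obtain ⟨x, hx, y, hy, rfl⟩ := Set.mem_add.mp hz
    rw [hPdesc]
    intro i
    have h1 := hx i
    have h2 := hy i
    rw [pairing_add']
    have h3 : (1 - (a:ℝ) * (h i:ℝ)) + (((a:ℝ) - 1) * (h i:ℝ) - 1) = -(h i:ℝ) := by ring
    simp only [ge_iff_le] at *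
    linarith
  obtain ⟨V, hVlat, hPV⟩ := hP
  have hPcomp : IsCompact P := by
    rw [hPV]; exact (V.finite_toSet.isCompact_convexHull ℝ)
  have hPbd := hPcomp.isBounded
  have haPbd : Bornology.IsBounded ((a:ℝ) • P) := by
    have him : (a:ℝ) • P = (fun x => (a:ℝ) • x) '' P := (Set.image_smul).symm
    rw [him]
    exact (hPcomp.image (continuous_const_smul _)).isBounded
  have hS1bd : Bornology.IsBounded S1 :=
    haPbd.subset (Set.inter_subset_left.trans interior_subset)
  have hS1fin : S1.Finite := lattice_finite' Set.inter_subset_right hS1bd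
  have hS1ne : S1.Nonempty := ha.2.1
  have hQ1ne : (floorPoly ((a:ℝ) • P)).Nonempty := by
    rw [hQ1def]; exact hS1ne.mono (subset_convexHull ℝ _)
  have hPne : P.Nonempty := hfull.mono interior_subset
  have hQ2ne : (remPoly n h a).Nonempty := by
    obtain ⟨p, hp⟩ := hPne
    rw [hdecomp] at hp
    obtain ⟨x, hx, y, hy, rfl⟩ := Set.mem_add.mp hp
    exact ⟨y, hy⟩
  have hQ1closed : IsClosed (floorPoly ((a:ℝ) • P)) := by
    rw [hQ1def]; exact (hS1fin.isCompact_convexHull ℝ).isClosed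
  have hQ1bd : Bornology.IsBounded (floorPoly ((a:ℝ) • P)) := by
    rw [hQ1def]; exact (hS1fin.isCompact_convexHull ℝ).isBounded
  obtain ⟨q1, hq1⟩ := hQ1ne
  obtain ⟨CP, hCP⟩ := Metric.isBounded_iff.mp hPbd
  have hQ2bd : Bornology.IsBounded (remPoly n h a) := by
    rw [Metric.isBounded_iff]
    refine ⟨CP, fun y hy y' hy' => ?_⟩
    have h1 : q1 + y ∈ P := by rw [hdecomp]; exact Set.add_mem_add hq1 hy
    have h2 : q1 + y' ∈ P := by rw [hdecomp]; exact Set.add_mem_add hq1 hy'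
    calc dist y y' = dist (q1 + y) (q1 + y') := (dist_add_left q1 y y').symm
    _ ≤ CP := hCP h1 h2
  have hS2sub : S2 ⊆ remPoly n h a := by
    rw [hQ2def]; exact subset_convexHull ℝ _
  have hS2fin : S2.Finite := lattice_finite' (fun x hx => hx.1) (hQ2bd.subset hS2sub)
  have hS2ne : S2.Nonempty := by
    obtain ⟨q2, hq2⟩ := hQ2ne
    by_contra hc
    rw [Set.not_nonempty_iff_eq_empty] at hc
    rw [hQ2def, hc] at hq2
    simp at hq2
  have hQ2closed : IsClosed (remPoly n h a) := by
    rw [hQ2def]; exact (hS2fin.isCompact_convexHull ℝ).isClosed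
  have hQ2ne' : (remPoly n h a).Nonempty := by
    rw [hQ2def]; exact hS2ne.mono (subset_convexHull ℝ _)
  have hAQ1 : A ⊆ floorPoly ((a:ℝ) • P) := by
    intro x hx
    apply minkowski_cancel' (by rw [hQ1def]; exact convex_convexHull ℝ _) hQ1closed hQ2ne' hQ2bd
    intro c hc
    have h1 : x + c ∈ P := hABP (Set.add_mem_add hx (hQ2B hc))
    rwa [hdecomp] at h1
  have hBQ2 : Bs ⊆ remPoly n h a := by
    intro y hy
    apply minkowski_cancel' (by rw [hQ2def]; exact convex_convexHull ℝ _) hQ2closed ⟨q1, hq1⟩ hQ1bd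
    intro c hc
    have h1 : c + y ∈ P := hABP (Set.add_mem_add (hQ1A hc) hy)
    rw [hdecomp] at h1
    obtain ⟨u, hu, v, hv, huv⟩ := Set.mem_add.mp h1
    refine Set.mem_add.mpr ⟨v, hv, u, hu, ?_⟩
    rw [add_comm v u, huv, add_comm c y]
  have hfloorEq : floorPoly ((a:ℝ) • P) = A := Set.Subset.antisymm hQ1A hAQ1
  have hremEq : remPoly n h a = Bs := Set.Subset.antisymm hQ2B hBQ2
  refine ⟨hfloorEq, hremEq, ?_, ?_⟩
  · refine ⟨hS1fin.toFinset, ?_, ?_⟩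
    · rw [Set.Finite.coe_toFinset]; exact Set.inter_subset_right
    · rw [Set.Finite.coe_toFinset, ← hQ1def, hfloorEq]
  · refine ⟨hS2fin.toFinset, ?_, ?_⟩
    · rw [Set.Finite.coe_toFinset]; exact fun x hx => hx.1
    · rw [Set.Finite.coe_toFinset, ← hQ2def, hremEq]
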